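/- Suppose a sequence of positive reals (ρ_j) satisfies ρ_{j−1}·ρ_{j+1} ≤ ρ_j² for all large j and ρ_j → ∞. Then the sequence ρ_{j−1}/ρ_j is eventually monotone with limit at most 1, and the quantities δ_{j+1} = ( (ρ_{j−1}·ρ_{j−3}···)/(ρ_j·ρ_{j−2}···) )² satisfy δ_j = O(ρ_{j−1}^{−1}). -/

import Mathlib

open Filter

/-- Suppose `(ρ_j)` is positive, `ρ_{j−1} ρ_{j+1} ≤ ρ_j²` for all large `j`, and
`ρ_j → ∞`.  Then the ratios `ρ_{j−1}/ρ_j` are eventually monotone with a limit `≤ 1`,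
and the quantities `δ_{j+1} = ((ρ_{j−1} ρ_{j−3} ⋯)/(ρ_j ρ_{j−2} ⋯))²` (equivalently
`δ_1 = 1`, `δ_{j+1} = 1/(ρ_j² δ_j)`) satisfy `δ_j = O(ρ_{j−1}⁻¹)`. -/
theorem ratio_eventually_monotone_and_delta_bigO
    (ρ : ℕ → ℝ) (hpos : ∀ j, 1 ≤ j → 0 < ρ j)
    (hlc : ∃ N : ℕ, 2 ≤ N ∧ ∀ j, N ≤ j → ρ (j - 1) * ρ (j + 1) ≤ ρ j ^ 2)
    (htop : Tendsto (fun j => ρ j) atTop atTop)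
    (δ : ℕ → ℝ) (hδ1 : δ 1 = 1)
    (hδrec : ∀ j, 1 ≤ j → δ (j + 1) = 1 / (ρ j ^ 2 * δ j)) :
    (∃ M : ℕ, 1 ≤ M ∧
      ((∀ m n, M ≤ m → m ≤ n → ρ (m - 1) / ρ m ≤ ρ (n - 1) / ρ n) ∨
       (∀ m n, M ≤ m → m ≤ n → ρ (n - 1) / ρ n ≤ ρ (m - 1) / ρ m))) ∧
    (∃ l : ℝ, l ≤ 1 ∧
      Tendsto (fun j => ρ (j - 1) / ρ j) atTop (nhds l)) ∧
    (∃ K : ℝ, 0 < K ∧ ∃ N : ℕ, ∀ j, N ≤ j → δ j ≤ K / ρ (j - 1)) := by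
  obtain ⟨N, hN2, hN⟩ := hlc
  -- single step monotonicity
  have hstep : ∀ j, N ≤ j → ρ (j - 1) / ρ j ≤ ρ j / ρ (j + 1) := by
    intro j hj
    have h1 : 0 < ρ j := hpos j (by omega)
    have h2 : 0 < ρ (j + 1) := hpos _ (by omega)
    rw [div_le_div_iff₀ h1 h2]
    calc ρ (j - 1) * ρ (j + 1) ≤ ρ j ^ 2 := hN j hj
      _ = ρ j * ρ j := by ring
  -- eventual monotonicity
  have hmono : ∀ m n, N ≤ m → m ≤ n → ρ (m - 1) / ρ m ≤ ρ (n - 1) / ρ n := by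
    intro m n hm hmn
    induction n, hmn using Nat.le_induction with
    | base => exact le_refl _
    | succ n hn ih =>
      refine le_trans ih ?_
      have := hstep n (by omega)
      simpa using this
  -- ratios eventually at most 1
  have hle1 : ∀ j, N ≤ j → ρ (j - 1) / ρ j ≤ 1 := by
    intro j hj
    by_contra h
    push_neg at h
    have hdec : ∀ k, ρ (j + k) ≤ ρ j := by
      intro k
      induction k with
      | zero => simp
      | succ k ih =>
        have hr : 1 < ρ ((j + k + 1) - 1) / ρ (j + k + 1) :=
          lt_of_lt_of_le h (hmono j (j + k + 1) hj (by omega))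
        have hp : 0 < ρ (j + k + 1) := hpos _ (by omega)
        have hlt : ρ (j + k + 1) < ρ ((j + k + 1) - 1) := by
          rw [lt_div_iff₀ hp] at hr; linarith
        have heq : (j + k + 1) - 1 = j + k := by omega
        rw [heq] at hlt
        calc ρ (j + k + 1) ≤ ρ (j + k) := hlt.le
          _ ≤ ρ j := ih
    obtain ⟨k, hkj, hk⟩ := ((htop.eventually_gt_atTop (ρ j)).and (eventually_ge_atTop j)).exists
    have := hdec (k - j)
    rw [Nat.add_sub_cancel' hk] at this
    linarith
  -- limit of the ratios
  have hbdd : BddAbove (Set.range fun k => ρ ((N + k) - 1) / ρ (N + k)) := by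
    refine ⟨1, ?_⟩
    rintro x ⟨k, rfl⟩
    exact hle1 _ (by omega)
  have hmono' : Monotone fun k => ρ ((N + k) - 1) / ρ (N + k) := by
    intro a b hab
    exact hmono _ _ (by omega) (by omega)
  have hlim := tendsto_atTop_ciSup hmono' hbdd
  set l := ⨆ k, ρ ((N + k) - 1) / ρ (N + k) with hldef
  have hl1 : l ≤ 1 := ciSup_le fun k => hle1 _ (by omega)
  have hlim' : Tendsto (fun j => ρ (j - 1) / ρ j) atTop (nhds l) := by
    rw [← tendsto_add_atTop_iff_nat N]
    simpa [Nat.add_comm] using hlim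
  -- positivity of δ
  have hδpos : ∀ j, 1 ≤ j → 0 < δ j := by
    intro j hj
    induction j, hj using Nat.le_induction with
    | base => rw [hδ1]; norm_num
    | succ j hj ih =>
      rw [hδrec j hj]
      have : 0 < ρ j := hpos j hj
      positivity
  -- auxiliary quantity e j = δ j * ρ (j-1)
  set e : ℕ → ℝ := fun j => δ j * ρ (j - 1) with he
  have hepos : ∀ j, N ≤ j → 0 < e j := by
    intro j hj
    exact mul_pos (hδpos j (by omega)) (hpos (j - 1) (by omega))
  have hee : ∀ j, N ≤ j → e (j + 1) * e j = ρ (j - 1) / ρ j := by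
    intro j hj
    have h1 : 0 < ρ j := hpos j (by omega)
    have hδj : 0 < δ j := hδpos j (by omega)
    simp only [he, Nat.add_sub_cancel]
    rw [hδrec j (by omega)]
    field_simp
  have hinc : ∀ j, N ≤ j → e j ≤ e (j + 2) := by
    intro j hj
    have h1 := hee j hj
    have h2 := hee (j + 1) (by omega)
    have hep : 0 < e (j + 1) := hepos _ (by omega)
    have hr := hmono j (j + 1) hj (by omega)
    have key : e j * e (j + 1) ≤ e (j + 2) * e (j + 1) := by
      calc e j * e (j + 1) = e (j + 1) * e j := mul_comm _ _
        _ = ρ (j - 1) / ρ j := h1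
        _ ≤ ρ ((j + 1) - 1) / ρ (j + 1) := hr
        _ = e (j + 1 + 1) * e (j + 1) := h2.symm
        _ = e (j + 2) * e (j + 1) := by norm_num
    exact le_of_mul_le_mul_right key hep
  set m : ℝ := min (e N) (e (N + 1)) with hmdef
  have hm : 0 < m := lt_min (hepos N le_rfl) (hepos (N + 1) (by omega))
  have hlow : ∀ j, N ≤ j → m ≤ e j ∧ m ≤ e (j + 1) := by
    intro j hj
    induction j, hj using Nat.le_induction with
    | base => exact ⟨min_le_left _ _, min_le_right _ _⟩
    | succ j hj ih =>
      refine ⟨ih.2, ?_⟩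
      calc m ≤ e j := ih.1
        _ ≤ e (j + 2) := hinc j hj
        _ = e (j + 1 + 1) := by norm_num
  refine ⟨⟨N, by omega, Or.inl hmono⟩, ⟨l, hl1, hlim'⟩, ⟨1 / m, by positivity, N + 1, ?_⟩⟩
  intro j hj
  have hj1 : N ≤ j - 1 := by omega
  have h1 := hee (j - 1) hj1
  rw [show j - 1 + 1 = j by omega] at h1
  have hr1 : ρ ((j - 1) - 1) / ρ (j - 1) ≤ 1 := hle1 _ hj1
  have hm1 : m ≤ e (j - 1) := (hlow (j - 1) hj1).1
  have hej : e j ≤ 1 / m := by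
    rw [le_div_iff₀ hm]
    calc e j * m ≤ e j * e (j - 1) :=
          mul_le_mul_of_nonneg_left hm1 (hepos j (by omega)).le
      _ = ρ ((j - 1) - 1) / ρ (j - 1) := h1
      _ ≤ 1 := hr1
  have hρj : 0 < ρ (j - 1) := hpos _ (by omega)
  rw [le_div_iff₀ hρj]
  exact hej
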